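/- Let A ∈ ℝ^{m×m} be symmetric positive semidefinite. Let Q ∈ ℝ^{m×ℓ} and Q̂ ∈ ℝ^{m×ℓ̂} have orthonormal columns, with ℓ ≤ ℓ̂ ≤ m and range(Q) ⊆ range(Q̂). Then for every i = 1, …, m, the i-th largest eigenvalue of Q Qᵀ A Q Qᵀ is at most the i-th largest eigenvalue of Q̂ Q̂ᵀ A Q̂ Q̂ᵀ. -/

import Mathlib

open Matrix

/-- Euclidean norm of a vector in `ℝ^m`. -/
noncomputable def euclNorm {m : ℕ} (y : Fin m → ℝ) : ℝ :=
  Real.sqrt (y ⬝ᵥ y)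

/-- The `A`-norm `‖v‖_A = √(vᵀ A v)`. -/
noncomputable def anorm {m : ℕ} (A : Matrix (Fin m) (Fin m) ℝ) (v : Fin m → ℝ) : ℝ :=
  Real.sqrt (v ⬝ᵥ A *ᵥ v)

/-- The range (column span) of a matrix `W ∈ ℝ^{m×r}`. -/
def colSpan {m r : ℕ} (W : Matrix (Fin m) (Fin r) ℝ) : Submodule ℝ (Fin m → ℝ) :=
  Submodule.span ℝ (Set.range Wᵀ)

/-- The block Krylov subspace `K_k(A, Z)`, the span of the columns of
`Z, AZ, …, A^{k-1} Z`. -/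
def krylov {m b : ℕ} (k : ℕ) (A : Matrix (Fin m) (Fin m) ℝ)
    (Z : Matrix (Fin m) (Fin b) ℝ) : Submodule ℝ (Fin m → ℝ) :=
  Submodule.span ℝ (⋃ j ∈ Finset.range k, Set.range (A ^ j * Z)ᵀ)

/-- The Krylov subspace `K_k(A, y)` for a vector `y`, the span of
`y, Ay, …, A^{k-1} y`. -/
def krylovVec {m : ℕ} (k : ℕ) (A : Matrix (Fin m) (Fin m) ℝ)
    (y : Fin m → ℝ) : Submodule ℝ (Fin m → ℝ) :=
  Submodule.span ℝ {v | ∃ j < k, v = (A ^ j) *ᵥ y}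

/-- Condition number: ratio of the largest to the smallest eigenvalue
(for a symmetric positive definite matrix, the spectrum is the set of its eigenvalues). -/
noncomputable def condNum {m : ℕ} (A : Matrix (Fin m) (Fin m) ℝ) : ℝ :=
  sSup (spectrum ℝ A) / sInf (spectrum ℝ A)

/-- `Trace(log M) = log (det M)` for a symmetric positive definite matrix `M`. -/
noncomputable def traceLog {n : ℕ} (M : Matrix (Fin n) (Fin n) ℝ) : ℝ :=
  Real.log M.det

/-- The eigenvalues of a symmetric matrix, sorted in decreasing order:
`eigDesc M i` is the `i`-th largest eigenvalue of `M` (`i` is 0-based). -/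
noncomputable def eigDesc {m : ℕ} (M : Matrix (Fin m) (Fin m) ℝ) : Fin m → ℝ :=
  open scoped Classical in
  if h : M.IsHermitian then fun i => (h.eigenvalues ∘ Tuple.sort h.eigenvalues) i.rev
  else 0



section Aux

variable {m : ℕ}

lemma dot_eq_inner (v w : Fin m → ℝ) :
    v ⬝ᵥ w = (inner (𝕜 := ℝ) (E := EuclideanSpace ℝ (Fin m)) (WithLp.toLp 2 v) (WithLp.toLp 2 w)) := by
  simp [PiLp.inner_apply, RCLike.inner_apply, dotProduct, mul_comm]

lemma dot_fsum {ι : Type*} (v : Fin m → ℝ) (s : Finset ι) (f : ι → Fin m → ℝ) :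
    v ⬝ᵥ (∑ j ∈ s, f j) = ∑ j ∈ s, v ⬝ᵥ f j := by
  simp [dotProduct, Finset.mul_sum]
  exact Finset.sum_comm

lemma ob_sum_repr (b : OrthonormalBasis (Fin m) ℝ (EuclideanSpace ℝ (Fin m)))
    (v : Fin m → ℝ) :
    ∑ j, ((b j : Fin m → ℝ) ⬝ᵥ v) • (b j : Fin m → ℝ) = v := by
  simp only [dot_eq_inner, WithLp.toLp_ofLp]
  have := congrArg (WithLp.ofLp (p := 2)) (b.sum_repr' (WithLp.toLp 2 v))
  simpa using this

lemma ob_dot (b : OrthonormalBasis (Fin m) ℝ (EuclideanSpace ℝ (Fin m))) (j k : Fin m) :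
    (b j : Fin m → ℝ) ⬝ᵥ (b k : Fin m → ℝ) = if j = k then 1 else 0 := by
  rw [dot_eq_inner, WithLp.toLp_ofLp, WithLp.toLp_ofLp]
  exact orthonormal_iff_ite.mp b.orthonormal j k

lemma rayleigh_expand (M : Matrix (Fin m) (Fin m) ℝ)
    (b : OrthonormalBasis (Fin m) ℝ (EuclideanSpace ℝ (Fin m))) (μ : Fin m → ℝ)
    (hb : ∀ j, M *ᵥ (b j : Fin m → ℝ) = μ j • (b j : Fin m → ℝ)) (v : Fin m → ℝ) :
    v ⬝ᵥ (M *ᵥ v) = ∑ j, μ j * ((b j : Fin m → ℝ) ⬝ᵥ v) ^ 2 := by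
  have h1 : M *ᵥ v = ∑ j, (((b j : Fin m → ℝ) ⬝ᵥ v) * μ j) • (b j : Fin m → ℝ) := by
    conv_lhs => rw [← ob_sum_repr b v]
    rw [← Matrix.mulVecLin_apply, map_sum]
    congr 1; funext j
    simp [Matrix.mulVecLin_apply, Matrix.mulVec_smul, hb j, smul_smul]
  rw [h1, dot_fsum]
  congr 1; funext j
  rw [dotProduct_smul, dotProduct_comm v]
  simp only [smul_eq_mul]
  ring

lemma norm_expand (b : OrthonormalBasis (Fin m) ℝ (EuclideanSpace ℝ (Fin m)))
    (v : Fin m → ℝ) :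
    v ⬝ᵥ v = ∑ j, ((b j : Fin m → ℝ) ⬝ᵥ v) ^ 2 := by
  have := rayleigh_expand (1 : Matrix (Fin m) (Fin m) ℝ) b (fun _ => 1)
    (fun j => by simp) v
  simpa using this

end Aux

section Sorted

variable {m : ℕ} {M : Matrix (Fin m) (Fin m) ℝ}

noncomputable def dbasis (hM : M.IsHermitian) :
    OrthonormalBasis (Fin m) ℝ (EuclideanSpace ℝ (Fin m)) :=
  hM.eigenvectorBasis.reindex ((Fin.revPerm.trans (Tuple.sort hM.eigenvalues)).symm)

lemma dbasis_apply (hM : M.IsHermitian) (i : Fin m) :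
    dbasis hM i = hM.eigenvectorBasis (Tuple.sort hM.eigenvalues i.rev) := by
  simp [dbasis, OrthonormalBasis.reindex_apply]

lemma eigDesc_eq (hM : M.IsHermitian) (i : Fin m) :
    eigDesc M i = hM.eigenvalues (Tuple.sort hM.eigenvalues i.rev) := by
  rw [eigDesc, dif_pos hM]
  rfl

lemma mulVec_dbasis (hM : M.IsHermitian) (i : Fin m) :
    M *ᵥ (dbasis hM i : Fin m → ℝ) = eigDesc M i • (dbasis hM i : Fin m → ℝ) := by
  rw [dbasis_apply, eigDesc_eq]
  exact hM.mulVec_eigenvectorBasis _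

lemma eigDesc_antitone (hM : M.IsHermitian) : Antitone (eigDesc M) := by
  intro i j hij
  rw [eigDesc_eq hM, eigDesc_eq hM]
  exact Tuple.monotone_sort hM.eigenvalues (Fin.rev_le_rev.mpr hij)

end Sorted

section Compress

variable {m : ℕ}

lemma li_of_dot (k : ℕ) (u : Fin k → (Fin m → ℝ))
    (h : ∀ a b, u a ⬝ᵥ u b = if a = b then 1 else 0) : LinearIndependent ℝ u := by
  rw [Fintype.linearIndependent_iff]
  intro g hg a
  have h2 := congrArg (fun w => u a ⬝ᵥ w) hg
  rw [dot_fsum] at h2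
  simp only [dotProduct_smul, h, smul_eq_mul] at h2
  rw [Finset.sum_eq_single a] at h2
  · simpa using h2
  · intro b _ hb; simp [Ne.symm hb]
  · simp

lemma compress_le (B P : Matrix (Fin m) (Fin m) ℝ) (hB : B.PosSemidef)
    (hP : Pᵀ = P) (hPP : P * P = P) (i : Fin m) :
    eigDesc (P * B * P) i ≤ eigDesc B i := by
  have hBh : B.IsHermitian := hB.1
  have hMh : (P * B * P).IsHermitian := by
    have : (P * B * P)ᴴ = P * B * P := by
      rw [Matrix.conjTranspose_mul, Matrix.conjTranspose_mul]
      have hPc : Pᴴ = P := by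
        exact (Matrix.conjTranspose_eq_transpose_of_trivial P).trans hP
      have hBc : Bᴴ = B := hBh
      rw [hPc, hBc, Matrix.mul_assoc]
    exact this
  set bB := dbasis hBh with hbB
  set bM := dbasis hMh with hbM
  -- the functional space S
  let Φ : (Fin m → ℝ) →ₗ[ℝ] (Fin (i : ℕ) → ℝ) :=
    { toFun := fun v j => (bB (Fin.castLE i.isLt.le j) : Fin m → ℝ) ⬝ᵥ (P *ᵥ v)
      map_add' := by
        intro x y; funext j; simp [Matrix.mulVec_add, dotProduct_add]
      map_smul' := by
        intro c x; funext j; simp [Matrix.mulVec_smul, dotProduct_smul] }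
  have hkerS : m - (i : ℕ) ≤ Module.finrank ℝ (LinearMap.ker Φ) := by
    have h1 := LinearMap.finrank_range_add_finrank_ker Φ
    have h2 : Module.finrank ℝ (LinearMap.range Φ) ≤ (i : ℕ) := by
      have := Submodule.finrank_le (LinearMap.range Φ)
      simpa [Module.finrank_fin_fun] using this
    have h3 : Module.finrank ℝ (Fin m → ℝ) = m := Module.finrank_fin_fun ℝ
    omega
  -- the span T
  let T : Submodule ℝ (Fin m → ℝ) :=
    Submodule.span ℝ (Set.range fun j : Fin ((i : ℕ) + 1) =>
      (bM (Fin.castLE i.isLt j) : Fin m → ℝ))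
  have hTrank : Module.finrank ℝ T = (i : ℕ) + 1 := by
    have hli : LinearIndependent ℝ (fun j : Fin ((i : ℕ) + 1) =>
        (bM (Fin.castLE i.isLt j) : Fin m → ℝ)) := by
      apply li_of_dot
      intro a b
      rw [ob_dot]
      by_cases h : a = b
      · simp [h]
      · have : Fin.castLE i.isLt a ≠ Fin.castLE i.isLt b := by
          simpa [Fin.ext_iff] using fun hh => h (Fin.ext hh)
        simp [h, this]
    simpa using finrank_span_eq_card hli
  -- nonzero intersection
  obtain ⟨v, hvmem, hv0⟩ : ∃ v ∈ (LinearMap.ker Φ ⊓ T), v ≠ 0 := by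
    have hsum := Submodule.finrank_sup_add_finrank_inf_eq (LinearMap.ker Φ) T
    have hle : Module.finrank ℝ ↥(LinearMap.ker Φ ⊔ T) ≤ m := by
      have := Submodule.finrank_le (LinearMap.ker Φ ⊔ T)
      simpa [Module.finrank_fin_fun] using this
    have hpos : 0 < Module.finrank ℝ ↥(LinearMap.ker Φ ⊓ T) := by
      have hi : (i : ℕ) < m := i.isLt
      omega
    have : (LinearMap.ker Φ ⊓ T) ≠ ⊥ := by
      intro hbot
      rw [hbot] at hpos
      simp at hpos
    exact (Submodule.ne_bot_iff _).mp this
  have hvS : ∀ j : Fin m, j < i → (bB j : Fin m → ℝ) ⬝ᵥ (P *ᵥ v) = 0 := by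
    intro j hj
    have hk : v ∈ LinearMap.ker Φ := hvmem.1
    have := LinearMap.mem_ker.mp hk
    have h2 := congrFun this ⟨(j : ℕ), hj⟩
    simpa [Φ, Fin.castLE, Fin.ext_iff] using h2
  have hvT : ∀ j : Fin m, i < j → (bM j : Fin m → ℝ) ⬝ᵥ v = 0 := by
    intro j hj
    have hT : v ∈ T := hvmem.2
    -- the dot functional vanishes on generators
    have : T ≤ LinearMap.ker
        (({ toFun := fun w : Fin m → ℝ => (bM j : Fin m → ℝ) ⬝ᵥ w
            map_add' := by intro x y; simp [dotProduct_add]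
            map_smul' := by intro c x; simp [dotProduct_smul] } :
          (Fin m → ℝ) →ₗ[ℝ] ℝ)) := by
      rw [Submodule.span_le]
      rintro _ ⟨k, rfl⟩
      simp only [SetLike.mem_coe, LinearMap.mem_ker, LinearMap.coe_mk, AddHom.coe_mk]
      rw [ob_dot]
      have : j ≠ Fin.castLE i.isLt k := by
        intro hh
        have : (j : ℕ) ≤ (i : ℕ) := by
          rw [hh]
          exact Nat.lt_succ_iff.mp k.isLt
        exact absurd this (not_le.mpr hj)
      simp [this]
    simpa using this hT
  -- Rayleigh chain
  have hdot_pos : 0 < v ⬝ᵥ v := by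
    have hnn : 0 ≤ v ⬝ᵥ v := Finset.sum_nonneg fun _ _ => mul_self_nonneg _
    have hne : v ⬝ᵥ v ≠ 0 := fun h => hv0 (dotProduct_self_eq_zero.mp h)
    exact lt_of_le_of_ne hnn (Ne.symm hne)
  have step1 : eigDesc (P * B * P) i * (v ⬝ᵥ v) ≤ v ⬝ᵥ ((P * B * P) *ᵥ v) := by
    rw [rayleigh_expand (P * B * P) bM (eigDesc (P * B * P)) (mulVec_dbasis hMh) v,
        norm_expand bM v, Finset.mul_sum]
    apply Finset.sum_le_sum
    intro j _
    rcases le_or_gt j i with h | h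
    · exact mul_le_mul_of_nonneg_right (eigDesc_antitone hMh h) (sq_nonneg _)
    · simp [hvT j h]
  have step2 : v ⬝ᵥ ((P * B * P) *ᵥ v) = (P *ᵥ v) ⬝ᵥ (B *ᵥ (P *ᵥ v)) := by
    rw [show (P * B * P) *ᵥ v = P *ᵥ (B *ᵥ (P *ᵥ v)) by
          rw [Matrix.mulVec_mulVec, Matrix.mulVec_mulVec]]
    rw [Matrix.dotProduct_mulVec v P, ← Matrix.mulVec_transpose, hP]
  have step3 : (P *ᵥ v) ⬝ᵥ (B *ᵥ (P *ᵥ v)) ≤ eigDesc B i * ((P *ᵥ v) ⬝ᵥ (P *ᵥ v)) := by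
    rw [rayleigh_expand B bB (eigDesc B) (mulVec_dbasis hBh) (P *ᵥ v),
        norm_expand bB (P *ᵥ v), Finset.mul_sum]
    apply Finset.sum_le_sum
    intro j _
    rcases lt_or_ge j i with h | h
    · simp [hvS j h]
    · exact mul_le_mul_of_nonneg_right (eigDesc_antitone hBh h) (sq_nonneg _)
  have hPv : (P *ᵥ v) ⬝ᵥ (P *ᵥ v) ≤ v ⬝ᵥ v := by
    have key : (P *ᵥ v) ⬝ᵥ (P *ᵥ v) = v ⬝ᵥ (P *ᵥ v) := by
      rw [Matrix.dotProduct_mulVec (P *ᵥ v) P v, ← Matrix.mulVec_transpose, hP,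
          Matrix.mulVec_mulVec, hPP]
      exact dotProduct_comm _ _
    have expand : (v - P *ᵥ v) ⬝ᵥ (v - P *ᵥ v) = v ⬝ᵥ v - (P *ᵥ v) ⬝ᵥ (P *ᵥ v) := by
      rw [sub_dotProduct, dotProduct_sub, dotProduct_sub, key,
          dotProduct_comm (P *ᵥ v) v]
      ring
    have hnn : 0 ≤ (v - P *ᵥ v) ⬝ᵥ (v - P *ᵥ v) :=
      Finset.sum_nonneg fun _ _ => mul_self_nonneg _
    linarith [expand ▸ hnn]
  have hBnn : 0 ≤ eigDesc B i := by
    rw [eigDesc_eq hBh]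
    exact hB.eigenvalues_nonneg _
  have chain : eigDesc (P * B * P) i * (v ⬝ᵥ v) ≤ eigDesc B i * (v ⬝ᵥ v) :=
    le_trans step1 (le_trans (step2 ▸ step3)
      (mul_le_mul_of_nonneg_left hPv hBnn))
  exact le_of_mul_le_mul_right chain hdot_pos

end Compress

/-- monotonicity of eigenvalues of compressions under enlargement of the
orthonormal basis. -/
theorem stmt6 {m l lh : ℕ} (hl : l ≤ lh) (hlh : lh ≤ m)
    (A : Matrix (Fin m) (Fin m) ℝ) (hA : A.PosSemidef)
    (Q : Matrix (Fin m) (Fin l) ℝ) (hQ : Qᵀ * Q = 1)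
    (Qh : Matrix (Fin m) (Fin lh) ℝ) (hQh : Qhᵀ * Qh = 1)
    (hrange : colSpan Q ≤ colSpan Qh) :
    ∀ i : Fin m,
      eigDesc (Q * Qᵀ * A * (Q * Qᵀ)) i ≤ eigDesc (Qh * Qhᵀ * A * (Qh * Qhᵀ)) i := by
  intro i
  set P := Q * Qᵀ with hPdef
  set Ph := Qh * Qhᵀ with hPhdef
  have hPt : Pᵀ = P := by
    rw [hPdef, Matrix.transpose_mul, Matrix.transpose_transpose]
  have hPht : Phᵀ = Ph := by
    rw [hPhdef, Matrix.transpose_mul, Matrix.transpose_transpose]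
  have hPP : P * P = P := by
    rw [hPdef, Matrix.mul_assoc, ← Matrix.mul_assoc Qᵀ Q Qᵀ, hQ, Matrix.one_mul]
  have hPhQh : Ph * Qh = Qh := by
    rw [hPhdef, Matrix.mul_assoc, hQh, Matrix.mul_one]
  have hfixv : ∀ x ∈ colSpan Qh, Ph *ᵥ x = x := by
    intro x hx
    induction hx using Submodule.span_induction with
    | mem x hx =>
      obtain ⟨k, rfl⟩ := hx
      have hcol : Qhᵀ k = Qh *ᵥ (fun t => if t = k then 1 else 0) := by
        funext j
        simp [Matrix.mulVec, dotProduct, Matrix.transpose_apply, mul_ite]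
      rw [hcol, Matrix.mulVec_mulVec, hPhQh]
    | zero => simp
    | add x y _ _ hx hy => rw [Matrix.mulVec_add, hx, hy]
    | smul c x _ hx => rw [Matrix.mulVec_smul, hx]
  have hfix : Ph * Q = Q := by
    ext j k
    have hxk : (Qᵀ k) ∈ colSpan Qh := hrange (Submodule.subset_span ⟨k, rfl⟩)
    have h2 := congrFun (hfixv _ hxk) j
    simpa [Matrix.mulVec, dotProduct, Matrix.mul_apply, Matrix.transpose_apply] using h2
  have hPhP : Ph * P = P := by
    rw [hPdef, ← Matrix.mul_assoc, hfix]
  have hPPh : P * Ph = P := by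
    have : (Ph * P)ᵀ = P * Ph := by
      rw [Matrix.transpose_mul, hPt, hPht]
    rw [← this, hPhP, hPt]
  have hPhc : Phᴴ = Ph := by
    have : Phᴴ = Phᵀ := by
      ext a b; simp [Matrix.conjTranspose_apply]
    rw [this, hPht]
  have hB : (Ph * A * Ph).PosSemidef := by
    have := hA.mul_mul_conjTranspose_same Ph
    rwa [hPhc] at this
  have hrw : P * A * P = P * (Ph * A * Ph) * P := by
    calc P * A * P = (P * Ph) * A * (Ph * P) := by rw [hPPh, hPhP]
    _ = P * (Ph * A * Ph) * P := by
        simp only [Matrix.mul_assoc]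
  rw [hrw]
  exact compress_le (Ph * A * Ph) P hB hPt hPP i
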